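/- The derivative of a B-spline interpolant equals the lower-order B-spline interpolant of the backward differences: let n ≥ 1 be a natural number, h > 0, and let c : ℤ → ℝ be finitely supported. Then the function F(x) = Σ_{i∈ℤ} c_i φ_{n+1}(x/h − i) is differentiable at every x ∈ ℝ, with F′(x) = (1/h) Σ_{i∈ℤ} (c_i − c_{i−1}) φ_n(x/h − i + 1/2). -/

import Mathlib

open MeasureTheory

/-- The centered cardinal B-spline: `bspline 0` is the indicator of `(-1/2, 1/2)`,
and `bspline (n+1) x = ∫_{-1/2}^{1/2} bspline n (x - y) dy`. -/
noncomputable def bspline : ℕ → ℝ → ℝ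
  | 0 => Set.indicator (Set.Ioo (-(1/2) : ℝ) (1/2)) (fun _ => 1)
  | n + 1 => fun x => ∫ y in (-(1/2) : ℝ)..(1/2), bspline n (x - y)

lemma bspline_eq_zero : ∀ (n : ℕ) (x : ℝ), ((n : ℝ) + 1)/2 ≤ |x| → bspline n x = 0 := by
  intro n
  induction n with
  | zero =>
    intro x hx
    simp only [bspline]
    apply Set.indicator_of_notMem
    intro hmem
    rw [Set.mem_Ioo] at hmem
    have : |x| < 1/2 := abs_lt.mpr ⟨hmem.1, hmem.2⟩
    norm_num at hx
    linarith
  | succ n ih =>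
    intro x hx
    show (∫ y in (-(1/2) : ℝ)..(1/2), bspline n (x - y)) = 0
    rw [intervalIntegral.integral_congr (g := fun _ => (0:ℝ))]
    · simp
    intro y hy
    rw [Set.uIcc_of_le (by norm_num)] at hy
    apply ih
    have h1 : |y| ≤ 1/2 := abs_le.mpr ⟨hy.1, hy.2⟩
    have h2 := abs_sub_abs_le_abs_sub x y
    push_cast
    push_cast at hx
    linarith

lemma bspline_succ_eq (n : ℕ) (x : ℝ) :
    bspline (n + 1) x = ∫ t in (x - 1/2)..(x + 1/2), bspline n t := by
  show (∫ y in (-(1/2) : ℝ)..(1/2), bspline n (x - y)) = _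
  rw [intervalIntegral.integral_comp_sub_left (bspline n) x]
  norm_num

lemma bspline_succ_primitive (n : ℕ) (hi : Integrable (bspline n)) (x : ℝ) :
    bspline (n + 1) x =
      (∫ t in (0:ℝ)..(x + 1/2), bspline n t) - ∫ t in (0:ℝ)..(x - 1/2), bspline n t := by
  rw [bspline_succ_eq]
  have := intervalIntegral.integral_add_adjacent_intervals
    (a := (0:ℝ)) (b := x - 1/2) (c := x + 1/2)
    (hi.intervalIntegrable) (hi.intervalIntegrable)
  linarith

lemma continuous_bspline_succ_of_integrable (n : ℕ) (hi : Integrable (bspline n)) :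
    Continuous (bspline (n + 1)) := by
  have hG : Continuous (fun y => ∫ t in (0:ℝ)..y, bspline n t) := hi.continuous_primitive 0
  have heq : bspline (n + 1) = fun x =>
      (∫ t in (0:ℝ)..(x + 1/2), bspline n t) - ∫ t in (0:ℝ)..(x - 1/2), bspline n t :=
    funext (bspline_succ_primitive n hi)
  rw [heq]
  exact (hG.comp (by continuity)).sub (hG.comp (by continuity))

lemma integrable_bspline : ∀ n : ℕ, Integrable (bspline n) := by
  intro n
  induction n with
  | zero =>
    rw [show bspline 0 = Set.indicator (Set.Ioo (-(1/2) : ℝ) (1/2)) (fun _ => (1:ℝ)) from rfl,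
      integrable_indicator_iff measurableSet_Ioo]
    exact (integrableOn_const_iff).mpr (Or.inr measure_Ioo_lt_top)
  | succ n ih =>
    have hcont := continuous_bspline_succ_of_integrable n ih
    apply hcont.integrable_of_hasCompactSupport
    apply HasCompactSupport.intro (isCompact_Icc (a := -(((n:ℝ)+2)/2)) (b := ((n:ℝ)+2)/2))
    intro x hx
    apply bspline_eq_zero
    rw [Set.mem_Icc] at hx
    push_cast
    rcases abs_cases x with ⟨he, _⟩ | ⟨he, _⟩ <;> rw [he] <;>
      [skip; skip] <;> by_contra hlt <;> push_neg at hlt <;> exact hx ⟨by linarith, by linarith⟩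

lemma continuous_bspline_succ (n : ℕ) : Continuous (bspline (n + 1)) :=
  continuous_bspline_succ_of_integrable n (integrable_bspline n)

lemma hasDerivAt_bspline (n : ℕ) (hn : 1 ≤ n) (x : ℝ) :
    HasDerivAt (bspline (n + 1)) (bspline n (x + 1/2) - bspline n (x - 1/2)) x := by
  obtain ⟨m, rfl⟩ := Nat.exists_eq_add_of_le hn
  set f := bspline (1 + m) with hf
  have hcont : Continuous f := by
    have : 1 + m = m + 1 := by omega
    rw [hf, this]; exact continuous_bspline_succ m
  have hi : Integrable f := integrable_bspline _
  have hG : ∀ y : ℝ, HasDerivAt (fun u => ∫ t in (0:ℝ)..u, f t) (f y) y := fun y =>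
    intervalIntegral.integral_hasDerivAt_right hi.intervalIntegrable
      hcont.stronglyMeasurable.stronglyMeasurableAtFilter hcont.continuousAt
  have h1 : HasDerivAt (fun x : ℝ => ∫ t in (0:ℝ)..(x + 1/2), f t) (f (x + 1/2)) x := by
    have := (hG (x + 1/2)).comp x ((hasDerivAt_id x).add_const (1/2 : ℝ))
    simpa [Function.comp_def] using this
  have h2 : HasDerivAt (fun x : ℝ => ∫ t in (0:ℝ)..(x - 1/2), f t) (f (x - 1/2)) x := by
    have := (hG (x - 1/2)).comp x ((hasDerivAt_id x).sub_const (1/2 : ℝ))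
    simpa [Function.comp_def] using this
  have := h1.sub h2
  apply this.congr_of_eventuallyEq
  filter_upwards with y
  exact bspline_succ_primitive _ hi y

/-- The derivative of a B-spline interpolant equals the lower-order B-spline interpolant
of the backward differences of the data. -/
theorem bspline_interpolant_deriv (n : ℕ) (hn : 1 ≤ n) (h : ℝ) (hh : 0 < h)
    (c : ℤ → ℝ) (hc : (Function.support c).Finite) :
    ∀ x : ℝ,
      HasDerivAt (fun x : ℝ => ∑' i : ℤ, c i * bspline (n + 1) (x / h - i))
        ((1 / h) * ∑' i : ℤ, (c i - c (i - 1)) * bspline n (x / h - i + 1/2)) x := by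
  intro x
  classical
  set s : Finset ℤ := hc.toFinset with hs
  set T : Finset ℤ := s ∪ s.image (· + 1) with hT
  have hcz : ∀ i : ℤ, i ∉ T → c i = 0 := fun i hi => by
    by_contra hne
    exact hi (Finset.mem_union_left _ (by simp [hs, Function.mem_support, hne]))
  have hcz' : ∀ i : ℤ, i ∉ T → c (i - 1) = 0 := fun i hi => by
    by_contra hne
    apply hi
    apply Finset.mem_union_right
    rw [Finset.mem_image]
    exact ⟨i - 1, by simp [hs, Function.mem_support, hne], by ring⟩
  -- rewrite the function as a finite sum
  have hfun : (fun x : ℝ => ∑' i : ℤ, c i * bspline (n + 1) (x / h - i)) =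
      fun x : ℝ => ∑ i ∈ T, c i * bspline (n + 1) (x / h - i) := by
    funext y
    exact tsum_eq_sum (fun i hi => by rw [hcz i hi, zero_mul])
  rw [hfun]
  -- rewrite the claimed derivative as a finite sum
  have hder : ((1 / h) * ∑' i : ℤ, (c i - c (i - 1)) * bspline n (x / h - i + 1/2)) =
      ∑ i ∈ T, c i *
        ((bspline n (x / h - i + 1/2) - bspline n (x / h - i - 1/2)) * (1 / h)) := by
    rw [tsum_eq_sum (s := T) (fun i hi => by rw [hcz i hi, hcz' i hi, sub_zero, zero_mul])]
    rw [Finset.mul_sum]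
    have expand : ∀ i ∈ T, (1 / h) * ((c i - c (i - 1)) * bspline n (x / h - i + 1/2)) =
        c i * (bspline n (x / h - i + 1/2) * (1/h)) -
        c (i - 1) * (bspline n (x / h - i + 1/2) * (1/h)) := fun i _ => by ring
    rw [Finset.sum_congr rfl expand, Finset.sum_sub_distrib]
    have split : ∀ i ∈ T, c i *
        ((bspline n (x / h - i + 1/2) - bspline n (x / h - i - 1/2)) * (1 / h)) =
        c i * (bspline n (x / h - i + 1/2) * (1/h)) -
        c i * (bspline n (x / h - i - 1/2) * (1/h)) := fun i _ => by ring
    rw [Finset.sum_congr rfl split, Finset.sum_sub_distrib]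
    congr 1
    have h1 : (∑ i ∈ T, c (i - 1) * (bspline n (x / h - i + 1/2) * (1/h))) =
        ∑ i ∈ s.image (· + 1), c (i - 1) * (bspline n (x / h - i + 1/2) * (1/h)) := by
      refine (Finset.sum_subset Finset.subset_union_right ?_).symm
      intro i _ hi
      have : c (i - 1) = 0 := by
        by_contra hne
        exact hi (Finset.mem_image.mpr ⟨i - 1, by simp [hs, Function.mem_support, hne], by ring⟩)
      rw [this, zero_mul]
    have h2 : (∑ i ∈ T, c i * (bspline n (x / h - i - 1/2) * (1/h))) =
        ∑ i ∈ s, c i * (bspline n (x / h - i - 1/2) * (1/h)) := by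
      refine (Finset.sum_subset Finset.subset_union_left ?_).symm
      intro i _ hi
      have : c i = 0 := by
        by_contra hne
        exact hi (by simp [hs, Function.mem_support, hne])
      rw [this, zero_mul]
    rw [h1, h2, Finset.sum_image (by intro a _ b _ hab; simp only at hab; omega)]
    apply Finset.sum_congr rfl
    intro j _
    have : ((j : ℝ) + 1) - 1 = (j : ℝ) := by ring
    push_cast
    ring_nf
  rw [hder]
  apply HasDerivAt.fun_sum
  intro i _
  have inner : HasDerivAt (fun y : ℝ => y / h - i) (1 / h) x := by
    simpa using ((hasDerivAt_id x).div_const h).sub_const (i : ℝ)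
  have outer := (hasDerivAt_bspline n hn (x / h - i)).comp x inner
  exact outer.const_mul (c i)
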